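/- Let K be a field of characteristic zero. The Jacobian algebra 𝔸₁ is a prime ring and its centre is exactly K. -/

import Mathlib

set_option synthInstance.maxHeartbeats 1000000
set_option maxHeartbeats 1000000

open Polynomial

/-- Multiplication by `x` on `K[x]`. -/
noncomputable def xO (K : Type*) [Field K] : Module.End K (Polynomial K) :=
  LinearMap.mulLeft K Polynomial.X

/-- The derivative `∂` on `K[x]`. -/
noncomputable def dO (K : Type*) [Field K] : Module.End K (Polynomial K) :=
  (Polynomial.derivative : Polynomial K →ₗ[K] Polynomial K)

/-- The Jacobian algebra `𝔸₁`: the subalgebra of `End_K(K[x])` generated by the Weyl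
algebra `K⟨x,∂⟩` together with the inverse of `H = ∂x`. -/
noncomputable def A1 (K : Type*) [Field K] : Subalgebra K (Module.End K (Polynomial K)) :=
  Algebra.adjoin K ({xO K, dO K} ∪
    {g | g * (dO K * xO K) = 1 ∧ (dO K * xO K) * g = 1})

/-- `I` is a two-sided ideal. -/
def IsTwoSided {K A : Type*} [CommSemiring K] [Ring A] [Algebra K A]
    (I : Submodule K A) : Prop :=
  ∀ a ∈ I, ∀ r : A, r * a ∈ I ∧ a * r ∈ I

/-- The carrier of `F ⊆ 𝔸₁`: operators vanishing on `x^m K[x]` for some `m`. -/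
def FCar (K : Type*) [Field K] : Set ↥(A1 K) :=
  {a | ∃ m : ℕ, ∀ p : Polynomial K,
    (a : Module.End K (Polynomial K)) (Polynomial.X ^ m * p) = 0}

section Aux

variable (K : Type*) [Field K] [CharZero K]

/-- The inverse of `H = ∂x`. -/
noncomputable def Hinv : Module.End K (Polynomial K) :=
  (Polynomial.basisMonomials K).constr K
    fun n => (((n : K) + 1))⁻¹ • (Polynomial.monomial n 1)

lemma H_monomial (n : ℕ) :
    (dO K * xO K) (Polynomial.monomial n (1 : K)) = ((n : K) + 1) • Polynomial.monomial n 1 := by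
  simp only [Module.End.mul_apply, xO, dO, LinearMap.mulLeft_apply, LinearMap.coe_coe,
    X_mul_monomial, derivative_monomial, smul_monomial, smul_eq_mul, mul_one, one_mul,
    Nat.add_sub_cancel]
  push_cast
  ring_nf

lemma Hinv_monomial (n : ℕ) :
    Hinv K (Polynomial.monomial n (1 : K)) = ((n : K) + 1)⁻¹ • Polynomial.monomial n 1 := by
  have h : (Polynomial.monomial n (1 : K)) = Polynomial.basisMonomials K n := by
    simp [Polynomial.coe_basisMonomials]
  rw [h, Hinv, Module.Basis.constr_basis]
  simp [Polynomial.coe_basisMonomials]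

lemma n1_ne (n : ℕ) : ((n : K) + 1) ≠ 0 := by
  have : ((n + 1 : ℕ) : K) ≠ 0 := Nat.cast_ne_zero.mpr n.succ_ne_zero
  push_cast at this
  exact this

lemma Hinv_mul : Hinv K * (dO K * xO K) = 1 := by
  apply (Polynomial.basisMonomials K).ext
  intro n
  rw [Module.End.mul_apply, Module.End.one_apply]
  simp only [Polynomial.coe_basisMonomials]
  rw [H_monomial, map_smul, Hinv_monomial, smul_smul, mul_inv_cancel₀ (n1_ne K n), one_smul]

lemma mul_Hinv : (dO K * xO K) * Hinv K = 1 := by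
  apply (Polynomial.basisMonomials K).ext
  intro n
  rw [Module.End.mul_apply, Module.End.one_apply]
  simp only [Polynomial.coe_basisMonomials]
  rw [Hinv_monomial, map_smul, H_monomial, smul_smul, inv_mul_cancel₀ (n1_ne K n), one_smul]

lemma xO_mem : xO K ∈ A1 K := Algebra.subset_adjoin (Or.inl (Or.inl rfl))

lemma dO_mem : dO K ∈ A1 K := Algebra.subset_adjoin (Or.inl (Or.inr rfl))

lemma Hinv_mem : Hinv K ∈ A1 K :=
  Algebra.subset_adjoin (Or.inr ⟨Hinv_mul K, mul_Hinv K⟩)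

/-- The projection onto constants. -/
noncomputable def e00 : Module.End K (Polynomial K) :=
  1 - xO K * Hinv K * dO K

lemma e00_mem : e00 K ∈ A1 K :=
  sub_mem (one_mem _) (mul_mem (mul_mem (xO_mem K) (Hinv_mem K)) (dO_mem K))

lemma e00_monomial (n : ℕ) (a : K) :
    e00 K (Polynomial.monomial n a) = if n = 0 then Polynomial.C a else 0 := by
  cases n with
  | zero =>
    simp [e00, LinearMap.sub_apply, Module.End.mul_apply, dO, xO, derivative_monomial,
      Polynomial.monomial_zero_left]
  | succ m =>
    simp only [e00, LinearMap.sub_apply, Module.End.one_apply, Module.End.mul_apply, dO,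
      LinearMap.coe_coe, derivative_monomial]
    have h : Polynomial.monomial (m + 1 - 1) (a * ((m + 1 : ℕ) : K)) =
        (a * ((m : K) + 1)) • Polynomial.monomial m (1 : K) := by
      rw [smul_monomial, smul_eq_mul, mul_one]
      push_cast
      norm_num
    rw [h, map_smul, Hinv_monomial, smul_smul, mul_assoc, mul_inv_cancel₀ (n1_ne K m), mul_one]
    simp [xO, LinearMap.mulLeft_apply, mul_smul_comm, X_mul_monomial, smul_monomial]

lemma e00_apply (q : Polynomial K) : e00 K q = Polynomial.C (q.coeff 0) := by
  induction q using Polynomial.induction_on' with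
  | add p q hp hq => rw [map_add, hp, hq, Polynomial.coeff_add, map_add]
  | monomial n a =>
      rw [e00_monomial, Polynomial.coeff_monomial]
      by_cases h : n = 0 <;> simp [h]


lemma monomial_eq_smul (n : ℕ) (a : K) :
    Polynomial.monomial n a = a • (Polynomial.X ^ n : Polynomial K) := by
  rw [X_pow_eq_monomial, smul_monomial, smul_eq_mul, mul_one]

lemma apply_nonzero {a : Module.End K (Polynomial K)} (ha : a ≠ 0) :
    ∃ n : ℕ, a (Polynomial.X ^ n) ≠ 0 := by
  by_contra h
  push_neg at h
  apply ha
  apply LinearMap.ext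
  intro q
  rw [LinearMap.zero_apply]
  induction q using Polynomial.induction_on' with
  | add p q hp hq => rw [map_add, hp, hq, add_zero]
  | monomial n c => rw [monomial_eq_smul, map_smul, h n, smul_zero]

lemma dO_pow_apply (k : ℕ) (q : Polynomial K) :
    ((dO K) ^ k) q = Polynomial.derivative^[k] q := by
  rw [Module.End.pow_apply]
  rfl

lemma r0_apply (n k : ℕ) (q : Polynomial K) :
    ((xO K) ^ n * e00 K * (dO K) ^ k) q = ((k.factorial : K) * q.coeff k) • Polynomial.X ^ n := by
  rw [Module.End.mul_apply, Module.End.mul_apply, dO_pow_apply, e00_apply,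
    Polynomial.coeff_iterate_derivative]
  simp only [zero_add, Nat.descFactorial_self]
  rw [xO, LinearMap.pow_mulLeft, LinearMap.mulLeft_apply]
  rw [nsmul_eq_mul, map_mul, Polynomial.C_eq_natCast]
  rw [mul_comm, smul_eq_C_mul, map_mul, Polynomial.C_eq_natCast, mul_assoc]

end Aux

/-- The Jacobian algebra `𝔸₁` is a prime ring and its centre is exactly
`K`. -/
theorem stmt4 (K : Type*) [Field K] [CharZero K] :
    (∀ a b : ↥(A1 K), (∀ r : ↥(A1 K), a * r * b = 0) → a = 0 ∨ b = 0) ∧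
    Subalgebra.center K ↥(A1 K) = ⊥ := by
  constructor
  · intro a b hab
    by_contra hcon
    push_neg at hcon
    obtain ⟨ha, hb⟩ := hcon
    have ha' : (a : Module.End K (Polynomial K)) ≠ 0 :=
      fun h => ha (Subtype.ext h)
    have hb' : (b : Module.End K (Polynomial K)) ≠ 0 :=
      fun h => hb (Subtype.ext h)
    obtain ⟨n, hn⟩ := apply_nonzero K ha'
    obtain ⟨p, hp⟩ : ∃ p, (b : Module.End K (Polynomial K)) p ≠ 0 := by
      by_contra h
      push_neg at h
      exact hb' (LinearMap.ext fun q => h q)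
    obtain ⟨k, hk⟩ : ∃ k, ((b : Module.End K (Polynomial K)) p).coeff k ≠ 0 := by
      by_contra h
      push_neg at h
      exact hp (Polynomial.ext fun m => by simpa using h m)
    set r0 : Module.End K (Polynomial K) := (xO K) ^ n * e00 K * (dO K) ^ k with hr0
    have hr0mem : r0 ∈ A1 K :=
      mul_mem (mul_mem (pow_mem (xO_mem K) n) (e00_mem K)) (pow_mem (dO_mem K) k)
    have h0 := hab ⟨r0, hr0mem⟩
    have h0' : (a : Module.End K (Polynomial K)) * r0 * (b : Module.End K (Polynomial K)) = 0 :=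
      congrArg Subtype.val h0
    have h1 : ((a : Module.End K (Polynomial K)) * r0 * (b : Module.End K (Polynomial K))) p
        = 0 := by rw [h0']; rfl
    rw [Module.End.mul_apply, Module.End.mul_apply, r0_apply, map_smul] at h1
    have hc : ((k.factorial : K) * ((b : Module.End K (Polynomial K)) p).coeff k) ≠ 0 :=
      mul_ne_zero (Nat.cast_ne_zero.mpr k.factorial_ne_zero) hk
    exact hn ((smul_eq_zero.mp h1).resolve_left hc)
  · apply le_antisymm _ bot_le
    intro z hz
    rw [Subalgebra.mem_center_iff] at hz
    have hx : xO K * (z : Module.End K (Polynomial K)) =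
        (z : Module.End K (Polynomial K)) * xO K :=
      congrArg Subtype.val (hz ⟨xO K, xO_mem K⟩)
    have hd : dO K * (z : Module.End K (Polynomial K)) =
        (z : Module.End K (Polynomial K)) * dO K :=
      congrArg Subtype.val (hz ⟨dO K, dO_mem K⟩)
    set Z : Module.End K (Polynomial K) := (z : Module.End K (Polynomial K)) with hZ
    set f : Polynomial K := Z 1 with hf
    have hxap : ∀ q : Polynomial K, Polynomial.X * Z q = Z (Polynomial.X * q) := by
      intro q
      have := congrArg (fun g : Module.End K (Polynomial K) => g q) hx
      simpa [xO, Module.End.mul_apply, LinearMap.mulLeft_apply] using this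
    have hdap : ∀ q : Polynomial K, Polynomial.derivative (Z q) = Z (Polynomial.derivative q) := by
      intro q
      have := congrArg (fun g : Module.End K (Polynomial K) => g q) hd
      simpa [dO, Module.End.mul_apply] using this
    have hpow : ∀ m : ℕ, Z (Polynomial.X ^ m) = Polynomial.X ^ m * f := by
      intro m
      induction m with
      | zero => simp [hf]
      | succ m ih =>
          have : (Polynomial.X : Polynomial K) ^ (m + 1) = Polynomial.X * Polynomial.X ^ m := by
            ring
          rw [this, ← hxap, ih]
          ring
    have hfd : Polynomial.derivative f = 0 := by
      have h1 : Polynomial.derivative (Z Polynomial.X) = f := by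
        rw [hdap, Polynomial.derivative_X, ← hf]
      have h2 : Z Polynomial.X = Polynomial.X * f := by
        simpa using hpow 1
      rw [h2, Polynomial.derivative_mul, Polynomial.derivative_X, one_mul] at h1
      have h3 : Polynomial.X * Polynomial.derivative f = 0 := by
        have := add_eq_left.mp h1
        exact this
      exact (mul_eq_zero.mp h3).resolve_left Polynomial.X_ne_zero
    obtain ⟨c, hc⟩ : ∃ c : K, f = Polynomial.C c :=
      ⟨f.coeff 0, Polynomial.eq_C_of_derivative_eq_zero hfd⟩
    have hZeq : Z = algebraMap K (Module.End K (Polynomial K)) c := by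
      rw [Module.algebraMap_end_eq_smul_id]
      apply LinearMap.ext
      intro q
      induction q using Polynomial.induction_on' with
      | add p q hp hq => rw [map_add, hp, hq, map_add]
      | monomial m a =>
          rw [monomial_eq_smul, map_smul, map_smul, hpow, hc]
          rw [LinearMap.smul_apply, LinearMap.id_apply]
          rw [mul_comm, ← Polynomial.smul_eq_C_mul, smul_comm]
    rw [Algebra.mem_bot]
    refine ⟨c, ?_⟩
    apply Subtype.ext
    rw [← hZ, hZeq]
    rfl
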